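/- Let g ≥ 2 and let Π_g be the surface group with presentation ⟨a₁,…,a_g,b₁,…,b_g | ∏_{i=1}^g [a_i,b_i] = 1⟩. Let π be a group and let N be a cyclic subgroup (possibly infinite cyclic) contained in the center of π such that the quotient π/N is isomorphic to Π_g. If the second group homology H₂(π;ℤ) with trivial integer coefficients is isomorphic to ℤ, then N is the trivial subgroup, and hence π is isomorphic to Π_g. -/

import Mathlib

/-!
STATEMENT 4: Let `g ≥ 2` and let `Π_g` be the surface group
`⟨a₁,…,a_g,b₁,…,b_g | ∏ᵢ [aᵢ,bᵢ] = 1⟩`.  Let `π` be a group and `N` a cyclic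
subgroup (possibly infinite cyclic) contained in the center of `π` such that
`π/N ≅ Π_g`.  If `H₂(π;ℤ) ≅ ℤ`, then `N` is trivial, and hence `π ≅ Π_g`.

The condition `π/N ≅ Π_g` is expressed by a surjective homomorphism
`φ : π →* Π_g` with kernel `N`.

Since this version of Mathlib does not contain group homology, we define
`H₂(G;ℤ)` (trivial coefficients) directly as the homology in degree 2 of the
standard inhomogeneous bar complex
`⋯ → ℤ[G³] →d₃ ℤ[G²] →d₂ ℤ[G] → ⋯`, where
`d₂(g₁,g₂) = (g₂) - (g₁g₂) + (g₁)` and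
`d₃(g₁,g₂,g₃) = (g₂,g₃) - (g₁g₂,g₃) + (g₁,g₂g₃) - (g₁,g₂)`.
-/

/-- The bar-complex differential `d₂ : ℤ[G²] → ℤ[G]` for trivial coefficients. -/
noncomputable def barD2 (G : Type) [Group G] : ((G × G) →₀ ℤ) →ₗ[ℤ] (G →₀ ℤ) :=
  Finsupp.linearCombination ℤ fun p : G × G =>
    Finsupp.single p.2 (1 : ℤ) - Finsupp.single (p.1 * p.2) 1 + Finsupp.single p.1 1

/-- The bar-complex differential `d₃ : ℤ[G³] → ℤ[G²]` for trivial coefficients. -/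
noncomputable def barD3 (G : Type) [Group G] : ((G × G × G) →₀ ℤ) →ₗ[ℤ] ((G × G) →₀ ℤ) :=
  Finsupp.linearCombination ℤ fun t : G × G × G =>
    Finsupp.single (t.2.1, t.2.2) (1 : ℤ) - Finsupp.single (t.1 * t.2.1, t.2.2) 1
      + Finsupp.single (t.1, t.2.1 * t.2.2) 1 - Finsupp.single (t.1, t.2.1) 1

/-- The second group homology `H₂(G;ℤ)` of `G` with trivial coefficients in `ℤ`,
defined as `ker d₂ / im d₃` in the bar complex. -/
noncomputable def groupHomology2Z (G : Type) [Group G] : Type :=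
  LinearMap.ker (barD2 G) ⧸
    (LinearMap.range (barD3 G)).comap (LinearMap.ker (barD2 G)).subtype

noncomputable instance (G : Type) [Group G] : AddCommGroup (groupHomology2Z G) := by
  unfold groupHomology2Z; infer_instance

noncomputable instance (G : Type) [Group G] : Module ℤ (groupHomology2Z G) := by
  unfold groupHomology2Z; infer_instance

open scoped commutatorElement in
/-- The single relator `∏ᵢ [aᵢ,bᵢ]` of the genus-`g` surface group, in the free
group on generators `a₁,…,a_g` (as `Sum.inl`) and `b₁,…,b_g` (as `Sum.inr`). -/
def surfaceRelator (g : ℕ) : FreeGroup (Fin g ⊕ Fin g) :=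
  (List.ofFn fun i : Fin g =>
    ⁅FreeGroup.of (Sum.inl i : Fin g ⊕ Fin g), FreeGroup.of (Sum.inr i : Fin g ⊕ Fin g)⁆).prod

/-- The genus-`g` surface group `Π_g = ⟨a₁,…,a_g,b₁,…,b_g | ∏ᵢ [aᵢ,bᵢ] = 1⟩`. -/
def SurfaceGroup (g : ℕ) : Type := PresentedGroup ({surfaceRelator g} : Set (FreeGroup (Fin g ⊕ Fin g)))

noncomputable instance (g : ℕ) : Group (SurfaceGroup g) := by
  unfold SurfaceGroup; infer_instance


/-- The discrete Heisenberg group. -/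
@[ext] structure Heis where
  p : ℤ
  q : ℤ
  z : ℤ

namespace Heis

instance : One Heis := ⟨⟨0, 0, 0⟩⟩
instance : Mul Heis := ⟨fun a b => ⟨a.p + b.p, a.q + b.q, a.z + b.z + a.p * b.q⟩⟩
instance : Inv Heis := ⟨fun a => ⟨-a.p, -a.q, -a.z + a.p * a.q⟩⟩

@[simp] lemma one_p : (1 : Heis).p = 0 := rfl
@[simp] lemma one_q : (1 : Heis).q = 0 := rfl
@[simp] lemma one_z : (1 : Heis).z = 0 := rfl
@[simp] lemma mul_p (a b : Heis) : (a * b).p = a.p + b.p := rfl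
@[simp] lemma mul_q (a b : Heis) : (a * b).q = a.q + b.q := rfl
@[simp] lemma mul_z (a b : Heis) : (a * b).z = a.z + b.z + a.p * b.q := rfl
@[simp] lemma inv_p (a : Heis) : (a⁻¹).p = -a.p := rfl
@[simp] lemma inv_q (a : Heis) : (a⁻¹).q = -a.q := rfl
@[simp] lemma inv_z (a : Heis) : (a⁻¹).z = -a.z + a.p * a.q := rfl

instance : Group Heis where
  mul_assoc a b c := by ext <;> simp <;> ring
  one_mul a := by ext <;> simp
  mul_one a := by ext <;> simp
  inv_mul_cancel a := by ext <;> simp <;> ring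

/-- central elements -/
def zc (t : ℤ) : Heis := ⟨0, 0, t⟩

@[simp] lemma zc_p (t : ℤ) : (zc t).p = 0 := rfl
@[simp] lemma zc_q (t : ℤ) : (zc t).q = 0 := rfl
@[simp] lemma zc_z (t : ℤ) : (zc t).z = t := rfl

@[simp] lemma zc_zero : zc 0 = 1 := rfl

lemma zc_mul (t : ℤ) (a : Heis) : zc t * a = ⟨a.p, a.q, t + a.z⟩ := by
  ext <;> simp

lemma zc_mul_zc (s t : ℤ) : zc s * zc t = zc (s + t) := by ext <;> simp

lemma zc_inv (t : ℤ) : (zc t)⁻¹ = zc (-t) := by ext <;> simp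

lemma zc_comm (t : ℤ) (a : Heis) : zc t * a = a * zc t := by ext <;> simp <;> ring

lemma conj_zc (a : Heis) (t : ℤ) : a * zc t * a⁻¹ = zc t := by
  rw [← zc_comm, mul_assoc, mul_inv_cancel, mul_one]

open scoped commutatorElement in
lemma commutator_val (b : ℤ) : ⁅(⟨1,0,0⟩ : Heis), (⟨0,b,0⟩ : Heis)⁆ = zc b := by
  show (⟨1,0,0⟩ : Heis) * ⟨0,b,0⟩ * (⟨1,0,0⟩ : Heis)⁻¹ * (⟨0,b,0⟩ : Heis)⁻¹ = zc b
  ext <;> simp <;> ring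

/-- integer "choose 2" polynomial -/
def sInt (a : ℤ) : ℤ := a * (a - 1) / 2

lemma two_sInt (a : ℤ) : 2 * sInt a = a * (a - 1) := by
  have h : (2:ℤ) ∣ a * (a - 1) := by
    rcases Int.even_or_odd a with h | h
    · exact Dvd.dvd.mul_right h.two_dvd _
    · refine Dvd.dvd.mul_left ?_ _
      rcases h with ⟨k, hk⟩
      exact ⟨k, by omega⟩
  exact Int.mul_ediv_cancel' h

lemma sInt_add (a b : ℤ) : sInt (a + b) = sInt a + sInt b + a * b := by
  have h := two_sInt (a + b)
  have ha := two_sInt a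
  have hb := two_sInt b
  have : 2 * sInt (a + b) = 2 * (sInt a + sInt b + a * b) := by rw [h]; ring_nf; linarith [ha, hb]
  omega

@[simp] lemma sInt_zero : sInt 0 = 0 := rfl
@[simp] lemma sInt_one : sInt 1 = 0 := rfl

/-- The 2-cocycle on `Heis` detecting the pairing of `H²` with commuting-pair cycles. -/
def Fco (a b : Heis) : ℤ := a.p * b.z + sInt a.p * b.q

lemma Fco_cocycle (a b c : Heis) :
    Fco b c - Fco (a * b) c + Fco a (b * c) - Fco a b = 0 := by
  simp only [Fco, mul_p, mul_q, mul_z, sInt_add]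
  ring

lemma Fco_zc_left (t : ℤ) (a b : Heis) : Fco (zc t * a) b = Fco a b := by
  simp [Fco, zc_mul]

lemma Fco_zc_right (t : ℤ) (a b : Heis) : Fco a (zc t * b) = Fco a b + a.p * t := by
  simp [Fco, zc_mul]; ring

lemma prod_map_zc (l : List ℤ) : (l.map zc).prod = zc l.sum := by
  induction l with
  | nil => simp
  | cons a l ih => simp [ih, zc_mul_zc]

end Heis

-- ===== auxiliary infrastructure =====
namespace SGAux

open scoped commutatorElement in
/-- hom applied to the surface relator -/
lemma hom_surfaceRelator {g : ℕ} {G : Type*} [Group G] (χ : FreeGroup (Fin g ⊕ Fin g) →* G) :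
    χ (surfaceRelator g) =
      (List.ofFn fun i : Fin g =>
        ⁅χ (FreeGroup.of (Sum.inl i)), χ (FreeGroup.of (Sum.inr i))⁆).prod := by
  rw [surfaceRelator, map_list_prod, List.map_ofFn]
  apply congrArg List.prod
  apply congrArg List.ofFn
  funext i
  simp only [Function.comp_def, map_commutatorElement]

/-- inclusion of the free group into the bigger free group -/
def inlHom (g : ℕ) : FreeGroup (Fin g ⊕ Fin g) →* FreeGroup ((Fin g ⊕ Fin g) ⊕ Unit) :=
  FreeGroup.lift (fun a => FreeGroup.of (Sum.inl a))

def relB (g : ℕ) : FreeGroup ((Fin g ⊕ Fin g) ⊕ Unit) := inlHom g (surfaceRelator g)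

def cgen (g : ℕ) : FreeGroup ((Fin g ⊕ Fin g) ⊕ Unit) := FreeGroup.of (Sum.inr ())

def NCb (g : ℕ) : Subgroup (FreeGroup ((Fin g ⊕ Fin g) ⊕ Unit)) :=
  Subgroup.normalClosure {relB g, cgen g}

instance (g : ℕ) : (NCb g).Normal := Subgroup.normalClosure_normal

lemma relB_mem (g : ℕ) : relB g ∈ NCb g :=
  Subgroup.subset_normalClosure (by simp)

lemma cgen_mem (g : ℕ) : cgen g ∈ NCb g :=
  Subgroup.subset_normalClosure (by simp)

/-- canonical projection onto the surface group -/
def mkS (g : ℕ) : FreeGroup (Fin g ⊕ Fin g) →* SurfaceGroup g :=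
  QuotientGroup.mk' (Subgroup.normalClosure ({surfaceRelator g} : Set (FreeGroup (Fin g ⊕ Fin g))))

lemma mkS_of (g : ℕ) (a : Fin g ⊕ Fin g) :
    mkS g (FreeGroup.of a) = (PresentedGroup.of a : PresentedGroup _) := rfl

lemma mkS_surjective (g : ℕ) : Function.Surjective (mkS g) :=
  QuotientGroup.mk'_surjective _

lemma mkS_relator (g : ℕ) : mkS g (surfaceRelator g) = 1 := by
  rw [mkS]
  exact (QuotientGroup.eq_one_iff _).mpr
    (Subgroup.subset_normalClosure (by simp))

end SGAux

namespace SGAux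

def psiFun (g : ℕ) (j : Fin g) (γb γc : ℤ) : ((Fin g ⊕ Fin g) ⊕ Unit) → Heis
  | Sum.inl (Sum.inl i) => if i = j then ⟨1,0,0⟩ else 1
  | Sum.inl (Sum.inr i) => if i = j then ⟨0,γb,0⟩ else 1
  | Sum.inr _ => ⟨0,0,γc⟩

def psiH (g : ℕ) (j : Fin g) (γb γc : ℤ) : FreeGroup ((Fin g ⊕ Fin g) ⊕ Unit) →* Heis :=
  FreeGroup.lift (psiFun g j γb γc)

@[simp] lemma psiH_of (g : ℕ) (j : Fin g) (γb γc : ℤ) (b : (Fin g ⊕ Fin g) ⊕ Unit) :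
    psiH g j γb γc (FreeGroup.of b) = psiFun g j γb γc b := by
  simp [psiH]

lemma psiH_cgen (g : ℕ) (j : Fin g) (γb γc : ℤ) :
    psiH g j γb γc (cgen g) = Heis.zc γc := by
  simp [cgen, psiFun]
  rfl

open scoped commutatorElement in
lemma psiH_relB (g : ℕ) (j : Fin g) (γb γc : ℤ) :
    psiH g j γb γc (relB g) = Heis.zc γb := by
  have h1 : (psiH g j γb γc).comp (inlHom g) =
      FreeGroup.lift (fun a => psiFun g j γb γc (Sum.inl a)) := by
    apply FreeGroup.ext_hom
    intro a
    simp [inlHom]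
  have h2 : psiH g j γb γc (relB g) =
      ((psiH g j γb γc).comp (inlHom g)) (surfaceRelator g) := rfl
  rw [h2, h1, hom_surfaceRelator]
  have h3 : (List.ofFn fun i : Fin g =>
      ⁅(FreeGroup.lift fun a => psiFun g j γb γc (Sum.inl a)) (FreeGroup.of (Sum.inl i)),
        (FreeGroup.lift fun a => psiFun g j γb γc (Sum.inl a)) (FreeGroup.of (Sum.inr i))⁆)
      = List.ofFn (Heis.zc ∘ fun i : Fin g => if i = j then γb else 0) := by
    apply congrArg List.ofFn
    funext i
    by_cases hij : i = j
    · simp [hij, psiFun, Function.comp_def, Heis.commutator_val]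
    · simp [hij, psiFun, Function.comp_def]
  rw [h3, ← List.map_ofFn, Heis.prod_map_zc, List.sum_ofFn]
  congr 1
  simp

end SGAux

namespace SGAux

lemma conj_central {G : Type*} [Group G] {y : G} (hy : ∀ a, a * y = y * a) (u : G) :
    u * y * u⁻¹ = y := by
  rw [hy u, mul_assoc, mul_inv_cancel, mul_one]

theorem surface_aux (g : ℕ) (hg : 2 ≤ g) (π : Type) [Group π]
    (x : π) (hx : x ≠ 1)
    (hxc : ∀ a : π, a * x = x * a)
    (φ : π →* SurfaceGroup g) (hφsurj : Function.Surjective φ)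
    (hφker : φ.ker = Subgroup.zpowers x)
    (e : groupHomology2Z π ≃ₗ[ℤ] ℤ) : False := by
  classical
  -- lifts of the generators
  set T : (Fin g ⊕ Fin g) → π :=
    fun a => Function.surjInv hφsurj (show SurfaceGroup g from PresentedGroup.of a) with hT
  have hφT : ∀ a, φ (T a) = (show SurfaceGroup g from PresentedGroup.of a) :=
    fun a => Function.surjInv_eq hφsurj _
  -- the big free group mapping onto π
  set qm : FreeGroup ((Fin g ⊕ Fin g) ⊕ Unit) →* π :=
    FreeGroup.lift (Sum.elim T fun _ => x) with hqm
  have hqm_inl : ∀ a, qm (FreeGroup.of (Sum.inl a)) = T a := by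
    intro a; simp [hqm]
  have hqm_c : qm (cgen g) = x := by simp [hqm, cgen]
  have hφx : φ x = 1 := by
    have : x ∈ φ.ker := by rw [hφker]; exact Subgroup.mem_zpowers x
    exact this
  -- φ ∘ qm ∘ inlHom is the canonical projection
  have hcomp : (φ.comp qm).comp (inlHom g) = mkS g := by
    apply FreeGroup.ext_hom
    intro a
    simp only [MonoidHom.comp_apply, inlHom, FreeGroup.lift_apply_of, hqm_inl, hφT, mkS_of]
    rfl
  have hφqm_relB : φ (qm (relB g)) = 1 := by
    have h1 : φ (qm (relB g)) = ((φ.comp qm).comp (inlHom g)) (surfaceRelator g) := rfl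
    rw [h1, hcomp, mkS_relator]
  -- the central element y = qm(relator) and its exponent k
  have hyN : qm (relB g) ∈ Subgroup.zpowers x := by
    rw [← hφker]; exact hφqm_relB
  obtain ⟨k, hk⟩ := Subgroup.mem_zpowers_iff.mp hyN
  have hycomm : ∀ a : π, a * qm (relB g) = qm (relB g) * a := by
    intro a
    rw [← hk]
    exact Commute.zpow_right (hxc a) k
  -- surjectivity of qm
  have hqmsurj : Function.Surjective qm := by
    intro gg
    obtain ⟨w, hw⟩ := mkS_surjective g (φ gg)
    have h1 : φ (qm (inlHom g w)) = φ gg := by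
      have h2 : φ (qm (inlHom g w)) = ((φ.comp qm).comp (inlHom g)) w := rfl
      rw [h2, hcomp, hw]
    have h2 : gg * (qm (inlHom g w))⁻¹ ∈ φ.ker := by
      rw [MonoidHom.mem_ker, map_mul, map_inv, h1, mul_inv_cancel]
    rw [hφker, Subgroup.mem_zpowers_iff] at h2
    obtain ⟨m, hm⟩ := h2
    refine ⟨(cgen g) ^ m * inlHom g w, ?_⟩
    rw [map_mul, map_zpow, hqm_c, hm]
    group
  -- kernel of qm is inside the normal closure
  have hkerNC : ∀ w, qm w = 1 → w ∈ NCb g := by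
    have hrels : ∀ r ∈ ({surfaceRelator g} : Set (FreeGroup (Fin g ⊕ Fin g))),
        (FreeGroup.lift fun a => QuotientGroup.mk' (NCb g) (FreeGroup.of (Sum.inl a))) r = 1 := by
      intro r hr
      rw [Set.mem_singleton_iff] at hr
      subst hr
      have h1 : (FreeGroup.lift fun a =>
          QuotientGroup.mk' (NCb g) (FreeGroup.of (Sum.inl a))) =
          (QuotientGroup.mk' (NCb g)).comp (inlHom g) := by
        apply FreeGroup.ext_hom; intro a; simp [inlHom]
      rw [h1]
      exact (QuotientGroup.eq_one_iff _).mpr (relB_mem g)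
    set ι : SurfaceGroup g →* (FreeGroup ((Fin g ⊕ Fin g) ⊕ Unit) ⧸ NCb g) :=
      (show PresentedGroup ({surfaceRelator g} : Set (FreeGroup (Fin g ⊕ Fin g))) →*
        (FreeGroup ((Fin g ⊕ Fin g) ⊕ Unit) ⧸ NCb g) from PresentedGroup.toGroup hrels) with hι
    have hcompι : ι.comp (φ.comp qm) = QuotientGroup.mk' (NCb g) := by
      apply FreeGroup.ext_hom
      intro b
      rcases b with a | u
      · show ι (φ (qm (FreeGroup.of (Sum.inl a)))) = _
        rw [hqm_inl, hφT]
        exact PresentedGroup.toGroup.of hrels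
      · show ι (φ (qm (FreeGroup.of (Sum.inr u)))) = _
        have h3 : qm (FreeGroup.of (Sum.inr u)) = x := by simp [hqm]
        rw [h3, hφx, map_one]
        exact ((QuotientGroup.eq_one_iff _).mpr (cgen_mem g)).symm
    intro w hw
    have h1 : QuotientGroup.mk' (NCb g) w = 1 := by
      rw [← hcompι]
      show ι (φ (qm w)) = 1
      rw [hw, map_one, map_one]
    exact (QuotientGroup.eq_one_iff _).mp h1
  -- the key structural fact about elements of the normal closure
  have hkey : ∀ (j : Fin g) (γb γc : ℤ), ∀ w ∈ NCb g, ∃ α β : ℤ,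
      psiH g j γb γc w = Heis.zc (γb * α + γc * β) ∧ qm w = x ^ (k * α + β) := by
    intro j γb γc w hw
    refine Subgroup.closure_induction ?_ ?_ ?_ ?_ hw
    · -- conjugates of the two relators
      intro c hc
      rw [Group.mem_conjugatesOfSet_iff] at hc
      obtain ⟨b, hb, hconj⟩ := hc
      obtain ⟨u, hu⟩ := isConj_iff.mp hconj
      rcases hb with hb | hb
      · -- b = relB g
        refine ⟨1, 0, ?_, ?_⟩
        · rw [← hu, hb, map_mul, map_mul, map_inv, psiH_relB,
            conj_central (fun a => (Heis.zc_comm γb a).symm) (psiH g j γb γc u)]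
          norm_num
        · rw [← hu, hb, map_mul, map_mul, map_inv,
            conj_central hycomm (qm u), ← hk]
          norm_num
      · -- b = cgen g
        rw [Set.mem_singleton_iff] at hb
        refine ⟨0, 1, ?_, ?_⟩
        · rw [← hu, hb, map_mul, map_mul, map_inv, psiH_cgen,
            conj_central (fun a => (Heis.zc_comm γc a).symm) (psiH g j γb γc u)]
          norm_num
        · rw [← hu, hb, map_mul, map_mul, map_inv, hqm_c,
            conj_central hxc (qm u)]
          norm_num
    · exact ⟨0, 0, by norm_num, by norm_num⟩
    · rintro w1 w2 _ _ ⟨α1, β1, hψ1, hq1⟩ ⟨α2, β2, hψ2, hq2⟩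
      refine ⟨α1 + α2, β1 + β2, ?_, ?_⟩
      · rw [map_mul, hψ1, hψ2, Heis.zc_mul_zc]
        apply congrArg Heis.zc
        ring
      · rw [map_mul, hq1, hq2, ← zpow_add]
        apply congrArg (x ^ · : ℤ → π)
        ring
    · rintro w1 _ ⟨α, β, hψ, hq⟩
      refine ⟨-α, -β, ?_, ?_⟩
      · rw [map_inv, hψ, Heis.zc_inv]
        apply congrArg Heis.zc
        ring
      · rw [map_inv, hq, ← zpow_neg]
        apply congrArg (x ^ · : ℤ → π)
        ring
  -- order of x
  set n : ℕ := orderOf x with hn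
  have hn1 : n ≠ 1 := fun h => hx (orderOf_eq_one_iff.mp h)
  -- comparison of psi on two lifts of the same element
  have hW2 : ∀ (j : Fin g) (γb γc : ℤ) (d : ℕ),
      (∀ α β : ℤ, (n : ℤ) ∣ k * α + β → (d : ℤ) ∣ γb * α + γc * β) →
      ∀ f1 f2, qm f1 = qm f2 → ∃ δ : ℤ, (d : ℤ) ∣ δ ∧
        psiH g j γb γc f1 = Heis.zc δ * psiH g j γb γc f2 := by
    intro j γb γc d hcond f1 f2 h12
    have hker : qm (f1 * f2⁻¹) = 1 := by rw [map_mul, map_inv, h12, mul_inv_cancel]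
    obtain ⟨α, β, hψ, hq⟩ := hkey j γb γc _ (hkerNC _ hker)
    have hone : x ^ (k * α + β) = 1 := by rw [← hq, hker]
    refine ⟨γb * α + γc * β, hcond α β (orderOf_dvd_iff_zpow_eq_one.mpr hone), ?_⟩
    have h3 : psiH g j γb γc f1 =
        psiH g j γb γc (f1 * f2⁻¹) * psiH g j γb γc f2 := by
      rw [← map_mul]
      group
    rw [h3, hψ]
  -- section of qm
  set σ : π → FreeGroup ((Fin g ⊕ Fin g) ⊕ Unit) := Function.surjInv hqmsurj with hσdef
  have hσ : ∀ a, qm (σ a) = a := fun a => Function.surjInv_eq hqmsurj a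
  -- the family of cycles
  set zcyc : Fin g → ((π × π) →₀ ℤ) := fun i =>
    Finsupp.single (T (Sum.inl i), x) (1 : ℤ) - Finsupp.single (x, T (Sum.inl i)) 1 with hzcycdef
  have hzker : ∀ i, zcyc i ∈ LinearMap.ker (barD2 π) := by
    intro i
    rw [LinearMap.mem_ker, hzcycdef]
    simp only [map_sub, barD2, Finsupp.linearCombination_single, one_smul]
    rw [hxc (T (Sum.inl i))]
    abel
  -- the main engine
  have main : ∀ (γb γc : ℤ) (d : ℕ), d ≠ 1 → IsUnit ((γc : ℤ) : ZMod d) →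
      (∀ α β : ℤ, (n : ℤ) ∣ k * α + β → (d : ℤ) ∣ γb * α + γc * β) → False := by
    intro γb γc d hd1 hunit hcond
    -- a functional on cycles for every index j
    have KEYJ : ∀ j : Fin g, ∃ L : ((π × π) →₀ ℤ) →ₗ[ℤ] ZMod d,
        (∀ v, L (barD3 π v) = 0) ∧
        (∀ i : Fin g, L (zcyc i) = if i = j then ((γc : ℤ) : ZMod d) else 0) := by
      intro j
      set cc : π → π → ZMod d := fun a b =>
        (((Heis.Fco (psiH g j γb γc (σ a)) (psiH g j γb γc (σ b))) : ℤ) : ZMod d) with hccdef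
      have crep : ∀ (a b : π) f1 f2, qm f1 = a → qm f2 = b →
          cc a b = ((Heis.Fco (psiH g j γb γc f1) (psiH g j γb γc f2) : ℤ) : ZMod d) := by
        intro a b f1 f2 h1 h2
        obtain ⟨δ, hδd, hδ⟩ := hW2 j γb γc d hcond (σ a) f1 (by rw [hσ, h1])
        obtain ⟨δ', hδ'd, hδ'⟩ := hW2 j γb γc d hcond (σ b) f2 (by rw [hσ, h2])
        rw [hccdef]
        simp only
        rw [hδ, hδ', Heis.Fco_zc_left, Heis.Fco_zc_right, Int.cast_add,
          show (((psiH g j γb γc f1).p * δ' : ℤ) : ZMod d) = 0 from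
            (ZMod.intCast_zmod_eq_zero_iff_dvd _ _).mpr (Dvd.dvd.mul_left hδ'd _),
          add_zero]
      have hcoc : ∀ a b c : π, cc b c - cc (a * b) c + cc a (b * c) - cc a b = 0 := by
        intro a b c
        rw [crep b c (σ b) (σ c) (hσ b) (hσ c),
          crep (a * b) c (σ a * σ b) (σ c) (by rw [map_mul, hσ, hσ]) (hσ c),
          crep a (b * c) (σ a) (σ b * σ c) (hσ a) (by rw [map_mul, hσ, hσ]),
          crep a b (σ a) (σ b) (hσ a) (hσ b), map_mul, map_mul]
        have hco := Heis.Fco_cocycle (psiH g j γb γc (σ a)) (psiH g j γb γc (σ b))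
          (psiH g j γb γc (σ c))
        have h4 : ((Heis.Fco (psiH g j γb γc (σ b)) (psiH g j γb γc (σ c))
            - Heis.Fco (psiH g j γb γc (σ a) * psiH g j γb γc (σ b)) (psiH g j γb γc (σ c))
            + Heis.Fco (psiH g j γb γc (σ a)) (psiH g j γb γc (σ b) * psiH g j γb γc (σ c))
            - Heis.Fco (psiH g j γb γc (σ a)) (psiH g j γb γc (σ b)) : ℤ) : ZMod d) = 0 := by
          rw [hco]; norm_num
        push_cast at h4 ⊢
        linear_combination h4
      refine ⟨Finsupp.linearCombination ℤ (fun p : π × π => cc p.1 p.2), ?_, ?_⟩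
      · -- vanishing on boundaries
        have hcomp0 : (Finsupp.linearCombination ℤ (fun p : π × π => cc p.1 p.2)).comp
            (barD3 π) = 0 := by
          apply Finsupp.lhom_ext
          intro t b
          simp only [LinearMap.comp_apply, LinearMap.zero_apply, barD3,
            Finsupp.linearCombination_single, map_smul, map_sub, map_add, one_smul]
          rw [hcoc t.1 t.2.1 t.2.2]
          simp
        intro v
        have h5 := LinearMap.congr_fun hcomp0 v
        simpa using h5
      · -- values on the cycles
        intro i
        have h1 : qm (FreeGroup.of (Sum.inl (Sum.inl i))) = T (Sum.inl i) := hqm_inl _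
        have h2 : qm (cgen g) = x := hqm_c
        rw [hzcycdef]
        simp only [map_sub, Finsupp.linearCombination_single, one_smul]
        rw [crep (T (Sum.inl i)) x (FreeGroup.of (Sum.inl (Sum.inl i))) (cgen g) h1 h2,
          crep x (T (Sum.inl i)) (cgen g) (FreeGroup.of (Sum.inl (Sum.inl i))) h2 h1,
          psiH_cgen, psiH_of]
        by_cases hij : i = j
        · simp [hij, psiFun, Heis.Fco, Heis.zc]
        · simp [hij, psiFun, Heis.Fco, Heis.zc]
    -- instantiate at the two indices 0 and 1
    have h0g : 0 < g := by omega
    have h1g : 1 < g := by omega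
    set j1 : Fin g := ⟨0, h0g⟩ with hj1
    set j2 : Fin g := ⟨1, h1g⟩ with hj2
    have hj12 : j1 ≠ j2 := by simp [hj1, hj2, Fin.ext_iff]
    obtain ⟨L1, hL1v, hL1z⟩ := KEYJ j1
    obtain ⟨L2, hL2v, hL2z⟩ := KEYJ j2
    -- pass to homology
    have e' : (LinearMap.ker (barD2 π) ⧸
        (LinearMap.range (barD3 π)).comap (LinearMap.ker (barD2 π)).subtype) ≃ₗ[ℤ] ℤ := e
    obtain ⟨zz0, hzz0⟩ := Submodule.Quotient.mk_surjective
      ((LinearMap.range (barD3 π)).comap (LinearMap.ker (barD2 π)).subtype) (e'.symm 1)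
    set c1 : ℤ := e' (Submodule.Quotient.mk ⟨zcyc j1, hzker j1⟩) with hc1
    set c2 : ℤ := e' (Submodule.Quotient.mk ⟨zcyc j2, hzker j2⟩) with hc2
    have hrel : ∀ (i : Fin g) (ci : ℤ),
        ci = e' (Submodule.Quotient.mk ⟨zcyc i, hzker i⟩) →
        ∃ v, barD3 π v = zcyc i - ci • (zz0 : (π × π) →₀ ℤ) := by
      intro i ci hci
      have h3 : (Submodule.Quotient.mk ⟨zcyc i, hzker i⟩ :
          LinearMap.ker (barD2 π) ⧸
            (LinearMap.range (barD3 π)).comap (LinearMap.ker (barD2 π)).subtype)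
          = ci • Submodule.Quotient.mk zz0 := by
        apply e'.injective
        rw [map_smul, hzz0, LinearEquiv.apply_symm_apply, smul_eq_mul, mul_one, ← hci]
      rw [← Submodule.Quotient.mk_smul, Submodule.Quotient.eq] at h3
      obtain ⟨v, hv⟩ := h3
      exact ⟨v, by rw [hv]; simp⟩
    obtain ⟨v1, hv1⟩ := hrel j1 c1 hc1
    obtain ⟨v2, hv2⟩ := hrel j2 c2 hc2
    -- evaluate the functionals
    have hval : ∀ (L : ((π × π) →₀ ℤ) →ₗ[ℤ] ZMod d), (∀ v, L (barD3 π v) = 0) →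
        ∀ (i : Fin g) (ci : ℤ), (∃ v, barD3 π v = zcyc i - ci • (zz0 : (π × π) →₀ ℤ)) →
        L (zcyc i) = ci • L (zz0 : (π × π) →₀ ℤ) := by
      rintro L hLv i ci ⟨v, hv⟩
      have h6 := hLv v
      rw [hv, map_sub, map_smul, sub_eq_zero] at h6
      exact h6
    set l1 : ZMod d := L1 (zz0 : (π × π) →₀ ℤ) with hl1
    set l2 : ZMod d := L2 (zz0 : (π × π) →₀ ℤ) with hl2
    have e11 : c1 • l1 = ((γc : ℤ) : ZMod d) := by
      rw [← hval L1 hL1v j1 c1 ⟨v1, hv1⟩, hL1z j1, if_pos rfl]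
    have e21 : c2 • l1 = 0 := by
      rw [← hval L1 hL1v j2 c2 ⟨v2, hv2⟩, hL1z j2, if_neg (by simpa using hj12.symm)]
    have e12 : c1 • l2 = 0 := by
      rw [← hval L2 hL2v j1 c1 ⟨v1, hv1⟩, hL2z j1, if_neg (by simpa using hj12)]
    have e22 : c2 • l2 = ((γc : ℤ) : ZMod d) := by
      rw [← hval L2 hL2v j2 c2 ⟨v2, hv2⟩, hL2z j2, if_pos rfl]
    -- the contradiction
    have hsq0 : (c1 • l1) * (c2 • l2) = 0 := by
      rw [smul_mul_smul_comm, mul_comm c1 c2, ← smul_mul_smul_comm, e21, e12, zero_mul]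
    have hsq : ((γc : ℤ) : ZMod d) * ((γc : ℤ) : ZMod d) = 0 := by
      rw [e11, e22] at hsq0
      exact hsq0
    have h7 : IsUnit ((0 : ZMod d)) := by
      rw [← hsq]; exact hunit.mul hunit
    have h01 : (0 : ZMod d) = 1 := isUnit_zero_iff.mp h7
    have h8 : ((1 : ℕ) : ZMod d) = 0 := by rw [Nat.cast_one, ← h01]
    have hd : d ∣ 1 := (CharP.cast_eq_zero_iff (ZMod d) d 1).mp h8
    exact hd1 (Nat.dvd_one.mp hd)
  -- now the case analysis producing the parameters
  by_cases hm : Nat.gcd n k.natAbs = 1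
  · -- "hard" case: use a genuinely Heisenberg functional
    have hco : IsCoprime (k : ℤ) (n : ℤ) := by
      rw [Int.isCoprime_iff_gcd_eq_one]
      simpa [Int.gcd, Nat.gcd_comm] using hm
    obtain ⟨γ, u, hbez⟩ := hco
    refine main 1 γ n hn1 ?_ ?_
    · -- γ is a unit mod n
      have hcast : ((γ : ℤ) : ZMod n) * ((k : ℤ) : ZMod n) = 1 := by
        have h9 := congrArg (fun t : ℤ => ((t : ZMod n))) hbez
        push_cast at h9
        rw [ZMod.natCast_self] at h9
        simpa [mul_comm] using h9
      exact IsUnit.of_mul_eq_one _ hcast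
    · intro α β hdvd
      obtain ⟨c, hc⟩ := hdvd
      refine ⟨γ * c + α * u, ?_⟩
      linear_combination γ * hc - α * hbez
  · -- "easy" case: use an abelian functional
    refine main 0 1 (Nat.gcd n k.natAbs) hm (by simp) ?_
    intro α β hdvd
    have hdn : ((Nat.gcd n k.natAbs : ℕ) : ℤ) ∣ (n : ℤ) :=
      Int.natCast_dvd_natCast.mpr (Nat.gcd_dvd_left _ _)
    have hdk : ((Nat.gcd n k.natAbs : ℕ) : ℤ) ∣ k := by
      refine dvd_trans (Int.natCast_dvd_natCast.mpr (Nat.gcd_dvd_right _ _)) ?_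
      exact Int.natAbs_dvd.mpr dvd_rfl
    have h1 : ((Nat.gcd n k.natAbs : ℕ) : ℤ) ∣ k * α + β := dvd_trans hdn hdvd
    have h2 : ((Nat.gcd n k.natAbs : ℕ) : ℤ) ∣ k * α := Dvd.dvd.mul_right hdk α
    have h3 : ((Nat.gcd n k.natAbs : ℕ) : ℤ) ∣ β := by
      have h4 := dvd_sub h1 h2
      simpa using h4
    simpa using h3

end SGAux

theorem central_cyclic_extension_of_surface_group_trivial
    (g : ℕ) (hg : 2 ≤ g) (π : Type) [Group π] (N : Subgroup π)
    (hcyclic : ∃ x : π, N = Subgroup.zpowers x)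
    (hcentral : N ≤ Subgroup.center π)
    (φ : π →* SurfaceGroup g) (hφsurj : Function.Surjective φ) (hφker : φ.ker = N)
    (hH2 : Nonempty (groupHomology2Z π ≃ₗ[ℤ] ℤ)) :
    N = ⊥ ∧ Nonempty (π ≃* SurfaceGroup g) := by
  obtain ⟨x, hNx⟩ := hcyclic
  by_cases hx1 : x = 1
  · subst hx1
    have hN : N = ⊥ := hNx.trans Subgroup.zpowers_one_eq_bot
    refine ⟨hN, ⟨MulEquiv.ofBijective φ ⟨?_, hφsurj⟩⟩⟩
    exact (MonoidHom.ker_eq_bot_iff φ).mp (by rw [hφker, hN])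
  · exfalso
    have hxc : ∀ a : π, a * x = x * a := by
      have hxN : x ∈ N := hNx ▸ Subgroup.mem_zpowers x
      exact fun a => Subgroup.mem_center_iff.mp (hcentral hxN) a
    exact SGAux.surface_aux g hg π x hx1 hxc φ hφsurj (hφker.trans hNx) hH2.some
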